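/- arXiv:math/0504186 — 4 statements merged into one kernel-verified Lean document; each statement's English description precedes it below -/
import Mathlib

section
/- Let k = 3a for a positive integer a, and let c > 2k. If A = [0, a-1] ∪ [c, c+a-1] ∪ [2c, 2c+a-1] (unions of integer intervals), then |A| = k and |2A| = 3|A| - 3 + (k/3 - 2). -/
open Pointwise

lemma icc_add_icc (p r d e : ℤ) (hd : 0 ≤ d) (he : 0 ≤ e) :
    Finset.Icc p (p + d) + Finset.Icc r (r + e) = Finset.Icc (p + r) (p + r + d + e) := by
  ext x
  simp only [Finset.mem_add, Finset.mem_Icc]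
  constructor
  · rintro ⟨y, ⟨hy1, hy2⟩, z, ⟨hz1, hz2⟩, rfl⟩; omega
  · intro h
    rcases le_or_gt p (x - (r + e)) with h' | h'
    · exact ⟨x - (r + e), by omega, r + e, by omega, by omega⟩
    · exact ⟨p, by omega, x - p, by omega, by omega⟩

theorem stmt_2 (a : ℕ) (c : ℤ) (ha : 0 < a) (hc : 2 * (3 * (a : ℤ)) < c)
    (A : Finset ℤ)
    (hA : A = Finset.Icc 0 ((a : ℤ) - 1) ∪ Finset.Icc c (c + (a : ℤ) - 1) ∪
      Finset.Icc (2 * c) (2 * c + (a : ℤ) - 1)) :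
    A.card = 3 * a ∧ ((A + A).card : ℤ) = 3 * (A.card : ℤ) - 3 + ((a : ℤ) - 2) := by
  have ha' : (1 : ℤ) ≤ (a : ℤ) := by exact_mod_cast ha
  have hI : ∀ u v : ℤ, Finset.Icc u (u + ((a : ℤ) - 1)) + Finset.Icc v (v + ((a : ℤ) - 1))
      = Finset.Icc (u + v) (u + v + ((a : ℤ) - 1) + ((a : ℤ) - 1)) := fun u v =>
    icc_add_icc u v _ _ (by omega) (by omega)
  have e0 : Finset.Icc (0 : ℤ) ((a : ℤ) - 1) = Finset.Icc (0 : ℤ) (0 + ((a : ℤ) - 1)) := by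
    ring_nf
  have e1 : Finset.Icc c (c + (a : ℤ) - 1) = Finset.Icc c (c + ((a : ℤ) - 1)) := by ring_nf
  have e2 : Finset.Icc (2 * c) (2 * c + (a : ℤ) - 1)
      = Finset.Icc (2 * c) (2 * c + ((a : ℤ) - 1)) := by ring_nf
  have hAA : A + A = Finset.Icc (0 : ℤ) (2 * (a : ℤ) - 2) ∪ Finset.Icc c (c + 2 * a - 2)
      ∪ Finset.Icc (2 * c) (2 * c + 2 * a - 2) ∪ Finset.Icc (3 * c) (3 * c + 2 * a - 2)
      ∪ Finset.Icc (4 * c) (4 * c + 2 * a - 2) := by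
    rw [hA, e0, e1, e2]
    rw [Finset.union_add, Finset.union_add, Finset.add_union, Finset.add_union,
      Finset.add_union, Finset.add_union, Finset.add_union, Finset.add_union,
      hI, hI, hI, hI, hI, hI, hI, hI, hI]
    ext x
    simp only [Finset.mem_union, Finset.mem_Icc]
    omega
  constructor
  · rw [hA]
    rw [Finset.card_union_of_disjoint, Finset.card_union_of_disjoint]
    · rw [Int.card_Icc, Int.card_Icc, Int.card_Icc]; omega
    · simp only [Finset.disjoint_left, Finset.mem_Icc]; intro x h1 h2; omega
    · simp only [Finset.disjoint_left, Finset.mem_union, Finset.mem_Icc]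
      intro x h1 h2; omega
  · rw [hAA, hA]
    rw [Finset.card_union_of_disjoint, Finset.card_union_of_disjoint,
      Finset.card_union_of_disjoint, Finset.card_union_of_disjoint,
      Finset.card_union_of_disjoint, Finset.card_union_of_disjoint]
    · simp only [Int.card_Icc]
      push_cast
      omega
    all_goals
      simp only [Finset.disjoint_left, Finset.mem_union, Finset.mem_Icc]
      intro x h1 h2
      omega
end

section
/- For every integer k > 15, the set A = [0, k-3] ∪ {k+10, 2k+20} of integers satisfies |A| = k and |2A| = 3k - 3 + 11. -/
open Pointwise

theorem stmt_3 (k : ℕ) (hk : 15 < k) (A : Finset ℤ)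
    (hA : A = Finset.Icc 0 ((k : ℤ) - 3) ∪ {(k : ℤ) + 10, 2 * (k : ℤ) + 20}) :
    A.card = k ∧ (A + A).card = 3 * k - 3 + 11 := by
  subst hA
  constructor
  · rw [Finset.card_union_of_disjoint]
    · rw [Int.card_Icc, Finset.card_pair (by omega : (k:ℤ) + 10 ≠ 2 * (k:ℤ) + 20)]
      omega
    · rw [Finset.disjoint_left]
      intro a ha hb
      simp only [Finset.mem_Icc] at ha
      simp only [Finset.mem_insert, Finset.mem_singleton] at hb
      omega
  · have hset : (Finset.Icc 0 ((k : ℤ) - 3) ∪ {(k : ℤ) + 10, 2 * (k : ℤ) + 20}) +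
        (Finset.Icc 0 ((k : ℤ) - 3) ∪ {(k : ℤ) + 10, 2 * (k : ℤ) + 20}) =
        (Finset.Icc 0 (2*(k:ℤ)+7) ∪ Finset.Icc (2*(k:ℤ)+20) (3*(k:ℤ)+17)) ∪
          {3*(k:ℤ)+30, 4*(k:ℤ)+40} := by
      ext x
      simp only [Finset.mem_add, Finset.mem_union, Finset.mem_Icc, Finset.mem_insert,
        Finset.mem_singleton]
      constructor
      · rintro ⟨a, ha, b, hb, rfl⟩
        omega
      · intro hx
        rcases hx with (⟨h0, h1⟩ | ⟨h0, h1⟩) | (h | h)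
        · by_cases h : x ≤ (k:ℤ) - 3
          · exact ⟨0, by omega, x, by omega, by omega⟩
          · by_cases h2 : x ≤ 2*(k:ℤ) - 6
            · exact ⟨x - ((k:ℤ)-3), by omega, (k:ℤ)-3, by omega, by omega⟩
            · exact ⟨(k:ℤ)+10, by omega, x - ((k:ℤ)+10), by omega, by omega⟩
        · exact ⟨2*(k:ℤ)+20, by omega, x - (2*(k:ℤ)+20), by omega, by omega⟩
        · exact ⟨(k:ℤ)+10, by omega, 2*(k:ℤ)+20, by omega, by omega⟩
        · exact ⟨2*(k:ℤ)+20, by omega, 2*(k:ℤ)+20, by omega, by omega⟩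
    rw [hset, Finset.card_union_of_disjoint, Finset.card_union_of_disjoint]
    · rw [Int.card_Icc, Int.card_Icc,
        Finset.card_pair (by omega : 3*(k:ℤ) + 30 ≠ 4 * (k:ℤ) + 40)]
      omega
    · rw [Finset.disjoint_left]
      intro a ha hb
      simp only [Finset.mem_Icc] at ha hb
      omega
    · rw [Finset.disjoint_left]
      intro a ha hb
      simp only [Finset.mem_union, Finset.mem_Icc] at ha
      simp only [Finset.mem_insert, Finset.mem_singleton] at hb
      omega
end

section
/- For every integer k > 14, the set A = [0, k-3] ∪ {3k, 3k+12} of integers satisfies |A| = k and |2A| = 3k - 3 + 11. -/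
open Pointwise

theorem stmt_4 (k : ℕ) (hk : 14 < k) (A : Finset ℤ)
    (hA : A = Finset.Icc 0 ((k : ℤ) - 3) ∪ {3 * (k : ℤ), 3 * (k : ℤ) + 12}) :
    A.card = k ∧ (A + A).card = 3 * k - 3 + 11 := by
  have hk' : (14 : ℤ) < (k : ℤ) := by exact_mod_cast hk
  have hmem : ∀ x : ℤ, x ∈ A ↔ (0 ≤ x ∧ x ≤ (k:ℤ) - 3) ∨ x = 3*(k:ℤ) ∨ x = 3*(k:ℤ)+12 := by
    intro x
    simp [hA, Finset.mem_union, Finset.mem_Icc]; tauto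
  have h2A : A + A = Finset.Icc 0 (2*(k:ℤ)-6) ∪ Finset.Icc (3*(k:ℤ)) (4*(k:ℤ)+9) ∪
      {6*(k:ℤ), 6*(k:ℤ)+12, 6*(k:ℤ)+24} := by
    ext x
    simp only [Finset.mem_add, Finset.mem_union, Finset.mem_Icc, Finset.mem_insert,
      Finset.mem_singleton, hmem]
    constructor
    · rintro ⟨a, ha, b, hb, rfl⟩; omega
    · rintro ((⟨h0, h1⟩ | ⟨h0, h1⟩) | hx)
      · exact ⟨max 0 (x - ((k:ℤ)-3)), by omega, min x ((k:ℤ)-3), by omega, by omega⟩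
      · rcases le_or_gt x (4*(k:ℤ)-3) with h | h
        · exact ⟨x - 3*(k:ℤ), by omega, 3*(k:ℤ), by omega, by omega⟩
        · exact ⟨x - (3*(k:ℤ)+12), by omega, 3*(k:ℤ)+12, by omega, by omega⟩
      · rcases hx with h|h|h
        · exact ⟨3*(k:ℤ), by omega, 3*(k:ℤ), by omega, by omega⟩
        · exact ⟨3*(k:ℤ), by omega, 3*(k:ℤ)+12, by omega, by omega⟩
        · exact ⟨3*(k:ℤ)+12, by omega, 3*(k:ℤ)+12, by omega, by omega⟩
  have hc3 : ({6*(k:ℤ), 6*(k:ℤ)+12, 6*(k:ℤ)+24} : Finset ℤ).card = 3 := by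
    rw [Finset.card_insert_of_notMem (by simp),
      Finset.card_insert_of_notMem (by simp), Finset.card_singleton]
  constructor
  · rw [hA, Finset.card_union_of_disjoint
      (by simp [Finset.disjoint_left, Finset.mem_Icc]; omega)]
    rw [Int.card_Icc, Finset.card_insert_of_notMem (by simp), Finset.card_singleton]
    omega
  · rw [h2A, Finset.card_union_of_disjoint, Finset.card_union_of_disjoint]
    · rw [Int.card_Icc, Int.card_Icc, hc3]; omega
    · rw [Finset.disjoint_left]; intro x hx hx'
      simp only [Finset.mem_Icc] at hx
      simp only [Finset.mem_Icc] at hx'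
      omega
    · rw [Finset.disjoint_left]; intro x hx hx'
      simp only [Finset.mem_union, Finset.mem_Icc] at hx
      simp only [Finset.mem_insert, Finset.mem_singleton] at hx'
      omega
end

section
/- Let d ≥ 1 and a, b ∈ [0, d-1]. Suppose A ⊆ a + dℕ and B ⊆ b + dℕ are sets of integers, x ∈ a + dℕ, y ∈ b + dℕ, and t ∈ dℕ. If |A ∩ [x, x+t]| + |B ∩ [y-t, y]| > t/d + 1, then x + y ∈ A + B. -/
open Pointwise

theorem stmt_5 (d a b x y t : ℤ) (A B : Finset ℤ)
    (hd : 1 ≤ d) (ha : a ∈ Finset.Icc 0 (d - 1)) (hb : b ∈ Finset.Icc 0 (d - 1))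
    (hA : ∀ z ∈ A, ∃ n : ℕ, z = a + d * n)
    (hB : ∀ z ∈ B, ∃ n : ℕ, z = b + d * n)
    (hx : ∃ n : ℕ, x = a + d * n) (hy : ∃ n : ℕ, y = b + d * n)
    (ht : ∃ n : ℕ, t = d * n)
    (hcard : (t / d : ℤ) + 1 <
      ((A ∩ Finset.Icc x (x + t)).card : ℤ) + ((B ∩ Finset.Icc (y - t) y).card : ℤ)) :
    x + y ∈ A + B := by
  obtain ⟨m, hm⟩ := hx
  obtain ⟨k, hk⟩ := hy
  obtain ⟨n, hn⟩ := ht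
  have hd0 : d ≠ 0 := by omega
  have htd : t / d = (n : ℤ) := by
    rw [hn, Int.mul_ediv_cancel_left _ hd0]
  -- divisibility facts
  have hAd : ∀ z ∈ A, d ∣ (z - x) := by
    intro z hz
    obtain ⟨p, hp⟩ := hA z hz
    exact ⟨(p : ℤ) - m, by rw [hp, hm]; ring⟩
  have hBd : ∀ z ∈ B, d ∣ (y - z) := by
    intro z hz
    obtain ⟨p, hp⟩ := hB z hz
    exact ⟨(k : ℤ) - p, by rw [hp, hk]; ring⟩
  set S := (A ∩ Finset.Icc x (x + t)).image (fun z => (z - x) / d) with hS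
  set T := (B ∩ Finset.Icc (y - t) y).image (fun z => (y - z) / d) with hT
  have hAeq : ∀ z ∈ A ∩ Finset.Icc x (x + t), z = x + d * ((z - x) / d) := by
    intro z hz
    have := Int.ediv_mul_cancel (hAd z (Finset.mem_inter.1 hz).1)
    linarith [this]
  have hBeq : ∀ z ∈ B ∩ Finset.Icc (y - t) y, z = y - d * ((y - z) / d) := by
    intro z hz
    have := Int.ediv_mul_cancel (hBd z (Finset.mem_inter.1 hz).1)
    linarith [this]
  have hSsub : S ⊆ Finset.Icc 0 (n : ℤ) := by
    intro c hc
    obtain ⟨z, hz, hzc⟩ := Finset.mem_image.1 hc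
    have hzeq := hAeq z hz
    have hzI := (Finset.mem_inter.1 hz).2
    rw [Finset.mem_Icc] at hzI ⊢
    rw [← hzc]
    constructor
    · nlinarith [hzeq, hzI.1]
    · nlinarith [hzeq, hzI.2, hn]
  have hTsub : T ⊆ Finset.Icc 0 (n : ℤ) := by
    intro c hc
    obtain ⟨z, hz, hzc⟩ := Finset.mem_image.1 hc
    have hzeq := hBeq z hz
    have hzI := (Finset.mem_inter.1 hz).2
    rw [Finset.mem_Icc] at hzI ⊢
    rw [← hzc]
    constructor
    · nlinarith [hzeq, hzI.2]
    · nlinarith [hzeq, hzI.1, hn]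
  have hScard : S.card = (A ∩ Finset.Icc x (x + t)).card := by
    apply Finset.card_image_of_injOn
    intro z1 h1 z2 h2 he
    have e1 := hAeq z1 h1
    have e2 := hAeq z2 h2
    rw [e1, e2, show (z1 - x)/d = (z2 - x)/d from he]
  have hTcard : T.card = (B ∩ Finset.Icc (y - t) y).card := by
    apply Finset.card_image_of_injOn
    intro z1 h1 z2 h2 he
    have e1 := hBeq z1 h1
    have e2 := hBeq z2 h2
    rw [e1, e2, show (y - z1)/d = (y - z2)/d from he]
  have hIcc : (Finset.Icc (0 : ℤ) (n : ℤ)).card = n + 1 := by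
    rw [Int.card_Icc]; simp
  have hne : (S ∩ T).Nonempty := by
    rw [← Finset.card_pos]
    have h1 : (S ∪ T).card ≤ n + 1 := by
      rw [← hIcc]
      exact Finset.card_le_card (Finset.union_subset hSsub hTsub)
    have h2 := Finset.card_union_add_card_inter S T
    rw [htd] at hcard
    omega
  obtain ⟨c, hc⟩ := hne
  rw [Finset.mem_inter] at hc
  obtain ⟨z1, hz1, hz1c⟩ := Finset.mem_image.1 hc.1
  obtain ⟨z2, hz2, hz2c⟩ := Finset.mem_image.1 hc.2
  have e1 := hAeq z1 hz1
  have e2 := hBeq z2 hz2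
  rw [hz1c] at e1
  rw [hz2c] at e2
  have : x + y = z1 + z2 := by rw [e1, e2]; ring
  rw [this]
  exact Finset.add_mem_add (Finset.mem_inter.1 hz1).1 (Finset.mem_inter.1 hz2).1
end
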